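/- Let 1 ≤ k ≤ n be integers. For every A ∈ M_2(ℂ)^{⊗n}, W_{≥k}[A] = 2k · Σ_{J ⊆ [n], |J| = k} Σ_{γ ∈ {1,2,3}^k} ∫_0^∞ (e^{2t} − 1)^{k−1} · e^{−2kt} · ‖P_t(∂_J^γ(A))‖_2² dt. -/

import Mathlib

open scoped BigOperators
open Matrix

noncomputable section

/-- The index set of the `n`-qubit Hilbert space `(ℂ²)^{⊗n}`. -/
abbrev QIdx (n : ℕ) := Fin n → Fin 2

/-- The algebra `M_2(ℂ)^{⊗n} ≅ M_{2^n}(ℂ)` of observables on `n` qubits. -/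
abbrev QOp (n : ℕ) := Matrix (QIdx n) (QIdx n) ℂ

/-- The four Pauli matrices `σ_0, σ_1, σ_2, σ_3`. -/
def pauli : Fin 4 → Matrix (Fin 2) (Fin 2) ℂ :=
  ![!![1, 0; 0, 1], !![0, 1; 1, 0], !![0, -Complex.I; Complex.I, 0], !![1, 0; 0, -1]]

/-- The Pauli string `σ_s = σ_{s_1} ⊗ ⋯ ⊗ σ_{s_n}`. -/
def pauliString {n : ℕ} (s : Fin n → Fin 4) : QOp n :=
  Matrix.of fun x y => ∏ j, pauli (s j) (x j) (y j)

/-- The normalized trace `τ(A) = 2^{-n} tr(A)`. -/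
def ntrace {n : ℕ} (A : QOp n) : ℂ := (2 ^ n : ℂ)⁻¹ * A.trace

/-- The Pauli (Fourier) coefficient `Â_s = τ(σ_s A)`. -/
def coef {n : ℕ} (A : QOp n) (s : Fin n → Fin 4) : ℂ := ntrace (pauliString s * A)

/-- The support `{j : s_j ≠ 0}` of a Pauli index. -/
def psupp {n : ℕ} (s : Fin n → Fin 4) : Finset (Fin n) :=
  Finset.univ.filter fun j => s j ≠ 0

/-- `τ(|A|^p)`, computed via the eigenvalues of `Aᴴ A` (so `|A| = (AᴴA)^{1/2}`). -/
def traceAbsPow {n : ℕ} (p : ℝ) (A : QOp n) : ℝ :=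
  (2 ^ n : ℝ)⁻¹ * ∑ i, ((Matrix.isHermitian_conjTranspose_mul_self A).eigenvalues i) ^ (p / 2)

/-- The normalized Schatten `p`-norm `‖A‖_p = τ(|A|^p)^{1/p}`. -/
def pnorm {n : ℕ} (p : ℝ) (A : QOp n) : ℝ := traceAbsPow p A ^ (1 / p)

/-- The operator norm `‖A‖ = ‖A‖_∞`. -/
def opNorm {n : ℕ} (A : QOp n) : ℝ := ‖Matrix.toEuclideanCLM (𝕜 := ℂ) A‖

/-- The `j`-th derivative `d_j(A) = (I - E_j)(A) = ∑_{s : s_j ≠ 0} Â_s σ_s`. -/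
def dOp {n : ℕ} (j : Fin n) (A : QOp n) : QOp n :=
  ∑ s ∈ Finset.univ.filter (fun s : Fin n → Fin 4 => s j ≠ 0), coef A s • pauliString s

/-- The derivative `d_J = ∏_{j ∈ J} d_j` for a subset `J ⊆ [n]`:
`d_J(A) = ∑_{s : J ⊆ supp s} Â_s σ_s`. -/
def dSet {n : ℕ} (J : Finset (Fin n)) (A : QOp n) : QOp n :=
  ∑ s ∈ Finset.univ.filter (fun s : Fin n → Fin 4 => ∀ j ∈ J, s j ≠ 0),
    coef A s • pauliString s

/-- The conditional expectation `E_J` killing all Pauli terms meeting `J`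
(i.e. the normalized partial trace `τ_J` over the qubits in `J`, re-embedded in
`M_2(ℂ)^{⊗n}` by tensoring with the identity on the qubits in `J`). -/
def eSet {n : ℕ} (J : Finset (Fin n)) (A : QOp n) : QOp n :=
  ∑ s ∈ Finset.univ.filter (fun s : Fin n → Fin 4 => ∀ j ∈ J, s j = 0),
    coef A s • pauliString s

/-- `σ_{k(j)}` : the Pauli matrix `σ_k` on the `j`-th factor and identity elsewhere. -/
def sigmaAt {n : ℕ} (j : Fin n) (k : Fin 4) : QOp n :=
  pauliString fun i => if i = j then k else 0

/-- The `j`-th `L^p`-influence `Inf^p_j[A] = ‖d_j(A)‖_p^p`. -/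
def infP {n : ℕ} (p : ℝ) (j : Fin n) (A : QOp n) : ℝ := traceAbsPow p (dOp j A)

/-- The total `L^p`-influence `Inf^p[A] = ∑_j Inf^p_j[A]`. -/
def infPTotal {n : ℕ} (p : ℝ) (A : QOp n) : ℝ := ∑ j, infP p j A

/-- The `L^p`-influence of a subset, `Inf^p_J[A] = ‖d_J(A)‖_p^p`. -/
def infPSet {n : ℕ} (p : ℝ) (J : Finset (Fin n)) (A : QOp n) : ℝ := traceAbsPow p (dSet J A)

/-- The variance `Var[A] = ‖A - τ(A)1‖_2²`. -/
def var {n : ℕ} (A : QOp n) : ℝ := traceAbsPow 2 (A - ntrace A • 1)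

/-- The noise operator `T_δ(A) = ∑_s δ^{|supp s|} Â_s σ_s`. -/
def noiseOp {n : ℕ} (δ : ℝ) (A : QOp n) : QOp n :=
  ∑ s : Fin n → Fin 4, ((δ : ℂ) ^ (psupp s).card * coef A s) • pauliString s

/-- The soft chunk `B_d = (T_{1-1/(3d)} - T_{1-1/(2d)})(A)`. -/
def softChunk {n : ℕ} (d : ℕ) (A : QOp n) : QOp n :=
  noiseOp (1 - 1 / (3 * (d : ℝ))) A - noiseOp (1 - 1 / (2 * (d : ℝ))) A

/-- `W_{≥k}[A] = ∑_{|supp s| ≥ k} |Â_s|²`. -/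
def wGE {n : ℕ} (k : ℕ) (A : QOp n) : ℝ :=
  ∑ s ∈ Finset.univ.filter (fun s : Fin n → Fin 4 => k ≤ (psupp s).card), ‖coef A s‖ ^ 2

/-- `W_{≈d}[A] = ∑_{d ≤ |supp s| < 2d} |Â_s|²`. -/
def wApprox {n : ℕ} (d : ℕ) (A : QOp n) : ℝ :=
  ∑ s ∈ Finset.univ.filter
      (fun s : Fin n → Fin 4 => d ≤ (psupp s).card ∧ (psupp s).card < 2 * d),
    ‖coef A s‖ ^ 2

/-- `W_J(A) = ∑_{|supp v ∩ J| = 1} |Â_v|²`. -/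
def wSet {n : ℕ} (J : Finset (Fin n)) (A : QOp n) : ℝ :=
  ∑ v ∈ Finset.univ.filter (fun v : Fin n → Fin 4 => (psupp v ∩ J).card = 1), ‖coef A v‖ ^ 2

/-- The noise stability `S_δ[A] = ∑_{s ≠ 0} δ^{|supp s|} |Â_s|²`. -/
def noiseStab {n : ℕ} (δ : ℝ) (A : QOp n) : ℝ :=
  ∑ s ∈ Finset.univ.filter (fun s : Fin n → Fin 4 => s ≠ 0),
    δ ^ (psupp s).card * ‖coef A s‖ ^ 2

/-- The partial Fourier series `∂_J^γ(A) = ∑_{s : s_J = γ} Â_s σ_{s_{J^c}}`,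
encoded by a single Pauli index `v` with `supp v = J` and `v|_J = γ ∈ {1,2,3}^J`,
re-embedded in `M_2(ℂ)^{⊗n}` by tensoring with the identity on the qubits in `J`. -/
def dPartial {n : ℕ} (v : Fin n → Fin 4) (A : QOp n) : QOp n :=
  ∑ s ∈ Finset.univ.filter (fun s : Fin n → Fin 4 => ∀ j ∈ psupp v, s j = v j),
    coef A s • pauliString fun j => if j ∈ psupp v then 0 else s j



section Aux
open MeasureTheory

lemma pauli_conj (a : Fin 4) (i j : Fin 2) : (starRingEnd ℂ) (pauli a i j) = pauli a j i := by
  fin_cases a <;> fin_cases i <;> fin_cases j <;> simp [pauli]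

lemma trace_pauli_mul (a b : Fin 4) : (pauli a * pauli b).trace = if a = b then 2 else 0 := by
  fin_cases a <;> fin_cases b <;>
    simp [pauli, Matrix.trace, Matrix.mul_apply, Fin.sum_univ_two, Matrix.diag,
      Complex.ext_iff] <;> norm_num

lemma trace_pauliString_mul {n : ℕ} (s t : Fin n → Fin 4) :
    (pauliString s * pauliString t).trace = ∏ j, (pauli (s j) * pauli (t j)).trace := by
  have key : ∀ j, (pauli (s j) * pauli (t j)).trace
      = ∑ p : Fin 2 × Fin 2, pauli (s j) p.1 p.2 * pauli (t j) p.2 p.1 := by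
    intro j
    simp [Matrix.trace, Matrix.diag, Matrix.mul_apply, Fintype.sum_prod_type]
  simp only [key]
  rw [Finset.prod_univ_sum]
  simp only [Matrix.trace, Matrix.diag, Matrix.mul_apply, pauliString, Matrix.of_apply,
    ← Finset.prod_mul_distrib]
  rw [← Fintype.sum_prod_type']
  exact Fintype.sum_equiv (Equiv.arrowProdEquivProdArrow (Fin n) (fun _ => Fin 2) (fun _ => Fin 2)).symm _ _
    (fun z => rfl)

lemma pauliString_conjTranspose {n : ℕ} (s : Fin n → Fin 4) :
    (pauliString s)ᴴ = pauliString s := by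
  ext x y
  simp [Matrix.conjTranspose_apply, pauliString, map_prod, pauli_conj]

lemma ntrace_pauliString_mul {n : ℕ} (s t : Fin n → Fin 4) :
    ntrace (pauliString s * pauliString t) = if s = t then 1 else 0 := by
  rw [ntrace, trace_pauliString_mul]
  simp only [trace_pauli_mul]
  by_cases h : s = t
  · subst h
    rw [if_pos rfl, Finset.prod_congr rfl (fun j _ => if_pos rfl), Finset.prod_const,
      Finset.card_univ, Fintype.card_fin, inv_mul_cancel₀ (pow_ne_zero n (by norm_num : (2:ℂ) ≠ 0))]
  · rw [if_neg h]
    obtain ⟨j, hj⟩ := Function.ne_iff.mp h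
    rw [Finset.prod_eq_zero (Finset.mem_univ j)
      (show (if s j = t j then (2:ℂ) else 0) = 0 from if_neg hj), mul_zero]

lemma coef_sum {n : ℕ} (c : (Fin n → Fin 4) → ℂ) (u : Fin n → Fin 4) :
    coef (∑ t, c t • pauliString t) u = c u := by
  have : coef (∑ t, c t • pauliString t) u
      = ∑ t, c t * ntrace (pauliString u * pauliString t) := by
    simp only [coef, Matrix.mul_sum, Matrix.mul_smul, Matrix.trace_sum, Matrix.trace_smul,
      ntrace, Finset.mul_sum, smul_eq_mul]
    exact Finset.sum_congr rfl fun t _ => by ring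
  rw [this]
  simp [ntrace_pauliString_mul]

lemma trace_eq_sum_eig {n : ℕ} {A : QOp n} (hA : A.IsHermitian) :
    A.trace = ∑ i, (hA.eigenvalues i : ℂ) := by
  exact hA.trace_eq_sum_eigenvalues

lemma parseval {n : ℕ} (c : (Fin n → Fin 4) → ℂ) :
    traceAbsPow 2 (∑ t, c t • pauliString t) = ∑ t, ‖c t‖ ^ 2 := by
  set B := ∑ t, c t • pauliString t with hB
  have hBH : Bᴴ = ∑ t, (starRingEnd ℂ) (c t) • pauliString t := by
    simp [hB, Matrix.conjTranspose_sum, Matrix.conjTranspose_smul, pauliString_conjTranspose]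
  have hnt : ntrace (Bᴴ * B) = ((∑ t, ‖c t‖ ^ 2 : ℝ) : ℂ) := by
    rw [hBH]
    have : ntrace ((∑ t, (starRingEnd ℂ) (c t) • pauliString t) * B)
        = ∑ t, (starRingEnd ℂ) (c t) * ntrace (pauliString t * B) := by
      simp only [Matrix.sum_mul, Matrix.smul_mul, ntrace, Matrix.trace_sum, Matrix.trace_smul,
        Finset.mul_sum, smul_eq_mul]
      exact Finset.sum_congr rfl fun t _ => by ring
    rw [this]
    have : ∀ t, ntrace (pauliString t * B) = c t := fun t => coef_sum c t
    simp only [this]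
    push_cast
    exact Finset.sum_congr rfl fun t _ => Complex.conj_mul' (c t)
  have heig : ∑ i, (Matrix.isHermitian_conjTranspose_mul_self B).eigenvalues i
      = 2 ^ n * ∑ t, ‖c t‖ ^ 2 := by
    have h1 := trace_eq_sum_eig (Matrix.isHermitian_conjTranspose_mul_self B)
    have h2 : (Bᴴ * B).trace = (2 ^ n : ℂ) * ((∑ t, ‖c t‖ ^ 2 : ℝ) : ℂ) := by
      rw [← hnt, ntrace, ← mul_assoc, mul_inv_cancel₀ (pow_ne_zero n (by norm_num : (2:ℂ) ≠ 0)), one_mul]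
    rw [h2] at h1
    exact_mod_cast h1.symm
  rw [traceAbsPow]
  have : ∀ i, ((Matrix.isHermitian_conjTranspose_mul_self B).eigenvalues i) ^ ((2:ℝ) / 2)
      = (Matrix.isHermitian_conjTranspose_mul_self B).eigenvalues i := by
    intro i
    norm_num
  simp only [this]
  rw [heig, ← mul_assoc, inv_mul_cancel₀ (by positivity : ((2:ℝ)^n) ≠ 0), one_mul]

lemma traceAbsPow_two_nonneg {n : ℕ} (B : QOp n) : 0 ≤ traceAbsPow 2 B := by
  rw [traceAbsPow]
  have h0 : ∀ i, 0 ≤ ((Matrix.isHermitian_conjTranspose_mul_self B).eigenvalues i) ^ ((2:ℝ)/2) :=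
    fun i => Real.rpow_nonneg (Matrix.eigenvalues_conjTranspose_mul_self_nonneg B i) _
  exact mul_nonneg (by positivity) (Finset.sum_nonneg fun i _ => h0 i)

lemma pnorm_two_sq {n : ℕ} (B : QOp n) : pnorm 2 B ^ 2 = traceAbsPow 2 B := by
  rw [pnorm, ← Real.rpow_natCast (traceAbsPow 2 B ^ ((1:ℝ)/2)) 2,
    ← Real.rpow_mul (traceAbsPow_two_nonneg B)]
  norm_num

lemma intIaux (p m : ℕ) (hpm : p < m) :
    IntegrableOn (fun t : ℝ => (Real.exp (2*t) - 1)^p * Real.exp (-(2*(m:ℝ)*t)))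
      (Set.Ioi 0) := by
  have hfg : (fun t : ℝ => (Real.exp (2*t) - 1)^p * Real.exp (-(2*(m:ℝ)*t)))
      = fun t : ℝ => ∑ i ∈ Finset.range (p+1),
          ((-1:ℝ)^(p-i) * (p.choose i : ℝ)) * Real.exp (-(2*((m:ℝ)-i)) * t) := by
    funext t
    rw [sub_eq_add_neg, add_pow, Finset.sum_mul]
    refine Finset.sum_congr rfl fun i hi => ?_
    have h1 : Real.exp (2*t) ^ i * Real.exp (-(2*(m:ℝ)*t)) = Real.exp (-(2*((m:ℝ)-i)) * t) := by
      rw [← Real.exp_nat_mul, ← Real.exp_add]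
      congr 1
      ring
    calc Real.exp (2*t) ^ i * (-1:ℝ)^(p-i) * (p.choose i : ℝ) * Real.exp (-(2*(m:ℝ)*t))
        = ((-1:ℝ)^(p-i) * (p.choose i : ℝ))
            * (Real.exp (2*t) ^ i * Real.exp (-(2*(m:ℝ)*t))) := by ring
      _ = ((-1:ℝ)^(p-i) * (p.choose i : ℝ)) * Real.exp (-(2*((m:ℝ)-i)) * t) := by rw [h1]
  rw [hfg]
  refine integrable_finset_sum _ fun i hi => Integrable.const_mul ?_ _
  refine exp_neg_integrableOn_Ioi 0 ?_
  have : (i:ℝ) ≤ p := by exact_mod_cast Nat.lt_succ_iff.mp (Finset.mem_range.mp hi)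
  have hm : (p:ℝ) < m := by exact_mod_cast hpm
  nlinarith

lemma int_exp_base (m : ℕ) (hm : 1 ≤ m) :
    (∫ t in Set.Ioi (0:ℝ), Real.exp (-(2*(m:ℝ)*t))) = (2*(m:ℝ))⁻¹ := by
  have hb : (0:ℝ) < 2*(m:ℝ) := by positivity
  have h := MeasureTheory.integral_comp_mul_left_Ioi (fun x => Real.exp (-x)) 0 hb
  simp only [mul_zero] at h
  rw [show (fun t : ℝ => Real.exp (-(2*(m:ℝ)*t))) = fun t : ℝ => Real.exp (-(2*(m:ℝ)*t)) from rfl]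
  calc (∫ t in Set.Ioi (0:ℝ), Real.exp (-(2*(m:ℝ)*t))) = (2*(m:ℝ))⁻¹ • ∫ x in Set.Ioi (0:ℝ), Real.exp (-x) := h
    _ = (2*(m:ℝ))⁻¹ := by rw [integral_exp_neg_Ioi_zero, smul_eq_mul, mul_one]

lemma intI (k : ℕ) (hk : 1 ≤ k) (m : ℕ) (hm : k ≤ m) :
    (∫ t in Set.Ioi (0:ℝ), (Real.exp (2*t) - 1)^(k-1) * Real.exp (-(2*(m:ℝ)*t)))
      = (2*(k:ℝ)*(m.choose k : ℝ))⁻¹ := by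
  induction k, hk using Nat.le_induction generalizing m with
  | base =>
    simp only [Nat.sub_self, pow_zero, one_mul]
    rw [int_exp_base m hm]
    rw [Nat.choose_one_right]
    norm_num
  | succ k hk ih =>
    have hm1 : 1 ≤ m - 1 := by omega
    have hcast : ((m-1:ℕ):ℝ) = (m:ℝ) - 1 := by
      push_cast [Nat.cast_sub (by omega : 1 ≤ m)]
      ring
    have h1 : ∀ t:ℝ, (Real.exp (2*t) - 1)^(k+1-1) * Real.exp (-(2*(m:ℝ)*t))
        = (Real.exp (2*t) - 1)^(k-1) * Real.exp (-(2*((m-1:ℕ):ℝ)*t))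
          - (Real.exp (2*t) - 1)^(k-1) * Real.exp (-(2*(m:ℝ)*t)) := by
      intro t
      have hexp : Real.exp (2*t) * Real.exp (-(2*(m:ℝ)*t)) = Real.exp (-(2*((m-1:ℕ):ℝ)*t)) := by
        rw [← Real.exp_add, hcast]
        congr 1
        ring
      rw [show k+1-1 = (k-1)+1 from by omega, pow_succ]
      linear_combination ((Real.exp (2*t) - 1)^(k-1)) * hexp
    simp only [h1]
    rw [MeasureTheory.integral_sub
      ((intIaux (k-1) (m-1) (by omega)).mono_set (by rfl))
      ((intIaux (k-1) m (by omega)).mono_set (by rfl))]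
    rw [ih (m-1) (by omega), ih m (by omega)]
    -- arithmetic
    have hb : 0 < m.choose k := Nat.choose_pos (by omega)
    have ha : 0 < (m-1).choose k := Nat.choose_pos (by omega)
    have hc : 0 < m.choose (k+1) := Nat.choose_pos (by omega)
    have e1 : (m.choose (k+1)) * (k+1) = m.choose k * (m - k) := Nat.choose_succ_right_eq m k
    have e2 : m * ((m-1).choose k) = m.choose (k+1) * (k+1) := by
      have h := Nat.add_one_mul_choose_eq (m-1) k
      have hs : (m-1)+1 = m := by omega
      simp only [hs, Nat.succ_eq_add_one] at h
      exact h
    have hmk : ((m - k : ℕ):ℝ) = (m:ℝ) - k := by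
      push_cast [Nat.cast_sub (by omega : k ≤ m)]
      ring
    have e1' : (m.choose (k+1) : ℝ) * ((k:ℝ)+1) = (m.choose k : ℝ) * ((m:ℝ) - (k:ℝ)) := by
      rw [← hmk]
      exact_mod_cast congrArg (Nat.cast : ℕ → ℝ) e1
    have e2' : (m:ℝ) * ((m-1).choose k : ℝ) = (m.choose (k+1) : ℝ) * ((k:ℝ)+1) := by
      exact_mod_cast congrArg (Nat.cast : ℕ → ℝ) e2
    have ha' : (0:ℝ) < ((m-1).choose k : ℝ) := by exact_mod_cast ha
    have hb' : (0:ℝ) < (m.choose k : ℝ) := by exact_mod_cast hb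
    have hc' : (0:ℝ) < (m.choose (k+1) : ℝ) := by exact_mod_cast hc
    have hk' : (0:ℝ) < (k:ℝ) := by exact_mod_cast (by omega : 0 < k)
    have hM : (0:ℝ) < (m:ℝ) := by exact_mod_cast (by omega : 0 < m)
    have hBMK : (m.choose k : ℝ) * ((m:ℝ) - (k:ℝ)) = (m:ℝ) * ((m-1).choose k : ℝ) :=
      e1'.symm.trans e2'.symm
    field_simp
    push_cast
    linear_combination (-((m.choose k:ℝ) - ((m-1).choose k:ℝ))) * e2'
      + ((m-1).choose k:ℝ) * hBMK


lemma mem_psupp {n : ℕ} {s : Fin n → Fin 4} {j : Fin n} : j ∈ psupp s ↔ s j ≠ 0 := by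
  simp [psupp]

/-- merge `v` on `psupp v` with `t` off `psupp v`. -/
def vmerge {n : ℕ} (v t : Fin n → Fin 4) : Fin n → Fin 4 := fun j => if j ∈ psupp v then v j else t j

/-- zero out `s` on `psupp v`. -/
def vmask {n : ℕ} (v s : Fin n → Fin 4) : Fin n → Fin 4 := fun j => if j ∈ psupp v then 0 else s j

lemma vmask_mem {n : ℕ} (v s : Fin n → Fin 4) : ∀ j ∈ psupp v, vmask v s j = 0 :=
  fun j hj => if_pos hj

lemma vmerge_mem {n : ℕ} (v t : Fin n → Fin 4) : ∀ j ∈ psupp v, vmerge v t j = v j :=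
  fun j hj => if_pos hj

lemma vmerge_vmask {n : ℕ} {v s : Fin n → Fin 4} (hs : ∀ j ∈ psupp v, s j = v j) :
    vmerge v (vmask v s) = s := by
  funext j
  by_cases hj : j ∈ psupp v
  · rw [vmerge, if_pos hj]
    exact (hs j hj).symm
  · rw [vmerge, if_neg hj, vmask, if_neg hj]

lemma vmask_vmerge {n : ℕ} {v t : Fin n → Fin 4} (ht : ∀ j ∈ psupp v, t j = 0) :
    vmask v (vmerge v t) = t := by
  funext j
  by_cases hj : j ∈ psupp v
  · rw [vmask, if_pos hj]
    exact (ht j hj).symm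
  · rw [vmask, if_neg hj, vmerge, if_neg hj]

lemma psupp_vmerge {n : ℕ} {v t : Fin n → Fin 4} (ht : ∀ j ∈ psupp v, t j = 0) :
    psupp (vmerge v t) \ psupp v = psupp t := by
  ext j
  simp only [Finset.mem_sdiff, mem_psupp]
  by_cases hj : j ∈ psupp v
  · simp only [vmerge, if_pos hj]
    constructor
    · rintro ⟨-, hc⟩
      exact absurd (mem_psupp.mp hj) hc
    · intro hc
      exact absurd (ht j hj) hc
  · simp only [vmerge, if_neg hj]
    exact ⟨fun h => h.1, fun h => ⟨h, fun h2 => hj (mem_psupp.mpr h2)⟩⟩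

lemma dPartial_eq {n : ℕ} (v : Fin n → Fin 4) (A : QOp n) :
    dPartial v A
      = ∑ t, (if ∀ j ∈ psupp v, t j = 0 then coef A (vmerge v t) else 0) • pauliString t := by
  rw [dPartial]
  calc ∑ s ∈ Finset.univ.filter (fun s : Fin n → Fin 4 => ∀ j ∈ psupp v, s j = v j),
        coef A s • pauliString (vmask v s)
      = ∑ t ∈ Finset.univ.filter (fun t : Fin n → Fin 4 => ∀ j ∈ psupp v, t j = 0),
          coef A (vmerge v t) • pauliString t := by
        refine Finset.sum_nbij' (fun s => vmask v s) (fun t => vmerge v t) ?_ ?_ ?_ ?_ ?_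
        · intro s hs
          simp only [Finset.mem_filter, Finset.mem_univ, true_and]
          exact vmask_mem v s
        · intro t ht
          simp only [Finset.mem_filter, Finset.mem_univ, true_and]
          exact vmerge_mem v t
        · intro s hs
          simp only [Finset.mem_filter, Finset.mem_univ, true_and] at hs
          exact vmerge_vmask hs
        · intro t ht
          simp only [Finset.mem_filter, Finset.mem_univ, true_and] at ht
          exact vmask_vmerge ht
        · intro s hs
          simp only [Finset.mem_filter, Finset.mem_univ, true_and] at hs
          rw [vmerge_vmask hs]
    _ = ∑ t, (if ∀ j ∈ psupp v, t j = 0 then coef A (vmerge v t) else 0) • pauliString t := by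
        rw [Finset.sum_filter]
        exact Finset.sum_congr rfl fun t _ => by split <;> simp

lemma coef_dPartial {n : ℕ} (v : Fin n → Fin 4) (A : QOp n) (u : Fin n → Fin 4) :
    coef (dPartial v A) u
      = if ∀ j ∈ psupp v, u j = 0 then coef A (vmerge v u) else 0 := by
  rw [dPartial_eq, coef_sum]

lemma pnorm_noise_dPartial {n : ℕ} (v : Fin n → Fin 4) (A : QOp n) (δ : ℝ) (hδ : 0 ≤ δ) :
    pnorm 2 (noiseOp δ (dPartial v A)) ^ 2
      = ∑ s ∈ Finset.univ.filter (fun s : Fin n → Fin 4 => ∀ j ∈ psupp v, s j = v j),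
          δ ^ (2 * (psupp s \ psupp v).card) * ‖coef A s‖ ^ 2 := by
  rw [pnorm_two_sq, noiseOp, parseval]
  have hnorm : ∀ (c : ℕ) (z : ℂ), ‖(δ:ℂ) ^ c * z‖ ^ 2 = δ ^ (2 * c) * ‖z‖ ^ 2 := by
    intro c z
    rw [norm_mul, norm_pow, Complex.norm_real, Real.norm_eq_abs, abs_of_nonneg hδ, mul_pow,
      ← pow_mul, mul_comm c 2]
  calc ∑ t, ‖(δ:ℂ) ^ (psupp t).card * coef (dPartial v A) t‖ ^ 2
      = ∑ t, (if ∀ j ∈ psupp v, t j = 0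
          then δ ^ (2 * (psupp t).card) * ‖coef A (vmerge v t)‖ ^ 2 else 0) := by
        refine Finset.sum_congr rfl fun t _ => ?_
        rw [coef_dPartial]
        split
        · rw [hnorm]
        · simp
    _ = ∑ t ∈ Finset.univ.filter (fun t : Fin n → Fin 4 => ∀ j ∈ psupp v, t j = 0),
          δ ^ (2 * (psupp t).card) * ‖coef A (vmerge v t)‖ ^ 2 := by
        rw [Finset.sum_filter]
    _ = ∑ s ∈ Finset.univ.filter (fun s : Fin n → Fin 4 => ∀ j ∈ psupp v, s j = v j),
          δ ^ (2 * (psupp s \ psupp v).card) * ‖coef A s‖ ^ 2 := by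
        refine Finset.sum_nbij' (fun t => vmerge v t) (fun s => vmask v s) ?_ ?_ ?_ ?_ ?_
        · intro t ht
          simp only [Finset.mem_filter, Finset.mem_univ, true_and] at ht ⊢
          exact vmerge_mem v t
        · intro s hs
          simp only [Finset.mem_filter, Finset.mem_univ, true_and] at hs ⊢
          exact vmask_mem v s
        · intro t ht
          simp only [Finset.mem_filter, Finset.mem_univ, true_and] at ht
          exact vmask_vmerge ht
        · intro s hs
          simp only [Finset.mem_filter, Finset.mem_univ, true_and] at hs
          exact vmerge_vmask hs
        · intro t ht
          simp only [Finset.mem_filter, Finset.mem_univ, true_and] at ht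
          rw [psupp_vmerge ht]

lemma count_v {n : ℕ} (k : ℕ) (s : Fin n → Fin 4) :
    (Finset.univ.filter (fun v : Fin n → Fin 4 =>
        (psupp v).card = k ∧ ∀ j ∈ psupp v, s j = v j)).card
      = (psupp s).card.choose k := by
  classical
  rw [← Finset.card_powersetCard]
  refine Finset.card_nbij' (fun v => psupp v) (fun J => fun j => if j ∈ J then s j else 0)
    ?_ ?_ ?_ ?_
  · intro v hv
    simp only [Finset.mem_coe, Finset.mem_filter, Finset.mem_univ, true_and] at hv
    rw [Finset.mem_coe, Finset.mem_powersetCard]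
    refine ⟨fun j hj => ?_, hv.1⟩
    rw [mem_psupp] at hj ⊢
    rw [hv.2 j (mem_psupp.mpr hj)]
    exact hj
  · intro J hJ
    rw [Finset.mem_coe, Finset.mem_powersetCard] at hJ
    simp only [Finset.mem_coe, Finset.mem_filter, Finset.mem_univ, true_and]
    have hps : psupp (fun j => if j ∈ J then s j else 0) = J := by
      ext j
      rw [mem_psupp]
      by_cases hj : j ∈ J
      · simp only [if_pos hj]
        exact ⟨fun _ => hj, fun _ => mem_psupp.mp (hJ.1 hj)⟩
      · simp only [if_neg hj]
        exact ⟨fun h => absurd rfl h, fun h => absurd h hj⟩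
    rw [hps]
    exact ⟨hJ.2, fun j hj => (if_pos hj).symm⟩
  · intro v hv
    simp only [Finset.mem_coe, Finset.mem_filter, Finset.mem_univ, true_and] at hv
    funext j
    dsimp only
    by_cases hj : j ∈ psupp v
    · rw [if_pos hj, hv.2 j hj]
    · rw [if_neg hj]
      exact (not_not.mp (fun h => hj (mem_psupp.mpr h))).symm
  · intro J hJ
    rw [Finset.mem_coe, Finset.mem_powersetCard] at hJ
    ext j
    rw [mem_psupp]
    dsimp only
    by_cases hj : j ∈ J
    · simp only [if_pos hj]
      exact ⟨fun _ => hj, fun _ => mem_psupp.mp (hJ.1 hj)⟩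
    · simp only [if_neg hj]
      exact ⟨fun h => absurd rfl h, fun h => absurd h hj⟩

end Aux

/-- **Lemma 4.2**: the semigroup integral representation of `W_{≥k}[A]`.
The double sum over subsets `J ⊆ [n]` with `|J| = k` and `γ ∈ {1,2,3}^k` is encoded
by a single Pauli index `v` with `|supp v| = k` (`J = supp v`, `γ = v|_J`), and
`∂_J^γ(A) ∈ M_2(ℂ)^{⊗Jᶜ}` is re-embedded in `M_2(ℂ)^{⊗n}`, where the depolarizing
semigroup `P_t = T_{e^{-t}}` restricts to that of `M_2(ℂ)^{⊗Jᶜ}` and the normalized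
2-norms agree. -/
theorem wGE_integral_representation (n k : ℕ) (hk1 : 1 ≤ k) (hkn : k ≤ n) (A : QOp n) :
    wGE k A = 2 * k *
      ∑ v ∈ Finset.univ.filter (fun v : Fin n → Fin 4 => (psupp v).card = k),
        ∫ t in Set.Ioi (0 : ℝ),
          (Real.exp (2 * t) - 1) ^ (k - 1) * Real.exp (-(2 * k * t)) *
            pnorm 2 (noiseOp (Real.exp (-t)) (dPartial v A)) ^ 2 := by
  set G : (Fin n → Fin 4) → ℝ :=
    fun s => ‖coef A s‖ ^ 2 * (2 * (k:ℝ) * ((psupp s).card.choose k : ℝ))⁻¹ with hG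
  have hstep1 : ∀ v ∈ Finset.univ.filter (fun v : Fin n → Fin 4 => (psupp v).card = k),
      (∫ t in Set.Ioi (0:ℝ), (Real.exp (2*t) - 1)^(k-1) * Real.exp (-(2*(k:ℝ)*t)) *
          pnorm 2 (noiseOp (Real.exp (-t)) (dPartial v A)) ^ 2)
        = ∑ s ∈ Finset.univ.filter (fun s : Fin n → Fin 4 => ∀ j ∈ psupp v, s j = v j),
            G s := by
    intro v hv
    simp only [Finset.mem_filter, Finset.mem_univ, true_and] at hv
    have hsub : ∀ s ∈ Finset.univ.filter (fun s : Fin n → Fin 4 => ∀ j ∈ psupp v, s j = v j),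
        psupp v ⊆ psupp s := by
      intro s hs
      simp only [Finset.mem_filter, Finset.mem_univ, true_and] at hs
      intro j hj
      rw [mem_psupp, hs j hj]
      exact mem_psupp.mp hj
    have hcard : ∀ s ∈ Finset.univ.filter
        (fun s : Fin n → Fin 4 => ∀ j ∈ psupp v, s j = v j),
        (psupp s).card = k + (psupp s \ psupp v).card := by
      intro s hs
      have h := Finset.card_sdiff_add_card_eq_card (hsub s hs)
      omega
    have hint : ∀ t : ℝ,
        (Real.exp (2*t) - 1)^(k-1) * Real.exp (-(2*(k:ℝ)*t)) *
            pnorm 2 (noiseOp (Real.exp (-t)) (dPartial v A)) ^ 2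
          = ∑ s ∈ Finset.univ.filter (fun s : Fin n → Fin 4 => ∀ j ∈ psupp v, s j = v j),
              ‖coef A s‖^2 *
                ((Real.exp (2*t) - 1)^(k-1) * Real.exp (-(2*((psupp s).card : ℝ)*t))) := by
      intro t
      rw [pnorm_noise_dPartial v A _ (Real.exp_nonneg _), Finset.mul_sum]
      refine Finset.sum_congr rfl fun s hs => ?_
      have hE : Real.exp (-(2*(k:ℝ)*t)) * Real.exp (-t) ^ (2*(psupp s \ psupp v).card)
          = Real.exp (-(2*((psupp s).card : ℝ)*t)) := by
        rw [← Real.exp_nat_mul, ← Real.exp_add]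
        congr 1
        have h := hcard s hs
        push_cast [h]
        ring
      linear_combination ((Real.exp (2*t) - 1)^(k-1) * ‖coef A s‖^2) * hE
    simp only [hint]
    rw [MeasureTheory.integral_finset_sum]
    · refine Finset.sum_congr rfl fun s hs => ?_
      have hks : k ≤ (psupp s).card := by
        have := hcard s hs
        omega
      rw [MeasureTheory.integral_const_mul, intI k hk1 (psupp s).card hks]
    · intro s hs
      exact ((intIaux (k-1) (psupp s).card (by have := hcard s hs; omega)).const_mul _)
  rw [Finset.sum_congr rfl hstep1]
  have hswap : ∑ v ∈ Finset.univ.filter (fun v : Fin n → Fin 4 => (psupp v).card = k),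
      ∑ s ∈ Finset.univ.filter (fun s : Fin n → Fin 4 => ∀ j ∈ psupp v, s j = v j), G s
      = ∑ s : Fin n → Fin 4, ((psupp s).card.choose k : ℝ) * G s := by
    calc ∑ v ∈ Finset.univ.filter (fun v : Fin n → Fin 4 => (psupp v).card = k),
        ∑ s ∈ Finset.univ.filter (fun s : Fin n → Fin 4 => ∀ j ∈ psupp v, s j = v j), G s
        = ∑ v : Fin n → Fin 4, ∑ s : Fin n → Fin 4,
            (if (psupp v).card = k ∧ (∀ j ∈ psupp v, s j = v j) then G s else 0) := by
          rw [Finset.sum_filter]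
          refine Finset.sum_congr rfl fun v _ => ?_
          by_cases hP : (psupp v).card = k
          · rw [if_pos hP, Finset.sum_filter]
            refine Finset.sum_congr rfl fun s _ => ?_
            by_cases hQ : ∀ j ∈ psupp v, s j = v j
            · rw [if_pos hQ, if_pos ⟨hP, hQ⟩]
            · rw [if_neg hQ, if_neg (fun h => hQ h.2)]
          · rw [if_neg hP]
            exact (Finset.sum_eq_zero fun s _ => if_neg (fun h => hP h.1)).symm
      _ = ∑ s : Fin n → Fin 4, ∑ v : Fin n → Fin 4,
            (if (psupp v).card = k ∧ (∀ j ∈ psupp v, s j = v j) then G s else 0) :=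
          Finset.sum_comm
      _ = ∑ s : Fin n → Fin 4, ((psupp s).card.choose k : ℝ) * G s := by
          refine Finset.sum_congr rfl fun s _ => ?_
          rw [← Finset.sum_filter, Finset.sum_const, count_v k s, nsmul_eq_mul]
  rw [hswap, Finset.mul_sum, wGE, Finset.sum_filter]
  refine Finset.sum_congr rfl fun s _ => ?_
  by_cases hks : k ≤ (psupp s).card
  · rw [if_pos hks, hG]
    have hC : (0:ℝ) < ((psupp s).card.choose k : ℝ) := by
      exact_mod_cast Nat.choose_pos hks
    have hk' : (0:ℝ) < (k:ℝ) := by exact_mod_cast hk1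
    field_simp
  · rw [if_neg hks]
    have h0 : (psupp s).card.choose k = 0 := Nat.choose_eq_zero_of_lt (by omega)
    simp [hG, h0]

end
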